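/- Let v : [0,π] → ℝ be continuous and satisfy the 1-concavity inequality: for all x, y ∈ [0,π] with 0 < y − x < π and all t ∈ [0,1], v((1−t)x + t y) ≥ (sin((1−t)(y−x))·v(x) + sin(t(y−x))·v(y)) / sin(y−x). Define f on the closed upper half-plane H = {(x,y) ∈ ℝ² : y ≥ 0} by f(r·cos s, r·sin s) = r·v(s) for r ≥ 0 and s ∈ [0,π] (equivalently, f(p) = ‖p‖·v(θ(p)) for p ≠ 0, where θ(p) ∈ [0,π] is the angle of p with the positive x-axis, and f(0,0) = 0). Then f is concave on H. -/

import Mathlib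

open Real Set


lemma v0_vpi (v : ℝ → ℝ)
    (hconc : ∀ x ∈ Set.Icc 0 Real.pi, ∀ y ∈ Set.Icc 0 Real.pi,
      0 < y - x → y - x < Real.pi → ∀ t ∈ Set.Icc (0:ℝ) 1,
        v ((1 - t) * x + t * y) ≥
          (Real.sin ((1 - t) * (y - x)) * v x + Real.sin (t * (y - x)) * v y) /
            Real.sin (y - x)) :
    v 0 + v Real.pi ≤ 0 := by
  have hπ : (0:ℝ) < Real.pi := Real.pi_pos
  have h1 := hconc 0 ⟨le_rfl, Real.pi_nonneg⟩ (3 * Real.pi / 4)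
    ⟨by positivity, by linarith⟩ (by linarith) (by linarith) (2/3) ⟨by norm_num, by norm_num⟩
  have h2 := hconc (Real.pi / 2) ⟨by positivity, by linarith⟩ Real.pi
    ⟨Real.pi_nonneg, le_rfl⟩ (by linarith) (by linarith) (1/2) ⟨by norm_num, by norm_num⟩
  rw [show (1 - 2/3) * 0 + 2/3 * (3 * Real.pi / 4) = Real.pi / 2 by ring,
      show (1 - 2/3 : ℝ) * (3 * Real.pi / 4 - 0) = Real.pi / 4 by ring,
      show (2/3 : ℝ) * (3 * Real.pi / 4 - 0) = Real.pi / 2 by ring,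
      show (3 * Real.pi / 4 - 0 : ℝ) = Real.pi - Real.pi / 4 by ring,
      Real.sin_pi_sub, Real.sin_pi_div_four, Real.sin_pi_div_two] at h1
  rw [show (1 - 1/2) * (Real.pi / 2) + 1/2 * Real.pi = 3 * Real.pi / 4 by ring,
      show (1 - 1/2 : ℝ) * (Real.pi - Real.pi / 2) = Real.pi / 4 by ring,
      show (1/2 : ℝ) * (Real.pi - Real.pi / 2) = Real.pi / 4 by ring,
      show (Real.pi - Real.pi / 2 : ℝ) = Real.pi / 2 by ring,
      Real.sin_pi_div_four, Real.sin_pi_div_two] at h2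
  have hs2 : (0:ℝ) < Real.sqrt 2 := Real.sqrt_pos.mpr (by norm_num)
  have hsq : Real.sqrt 2 ^ 2 = 2 := Real.sq_sqrt (by norm_num)
  rw [ge_iff_le, div_le_iff₀ (by positivity)] at h1 h2
  nlinarith [h1, h2, hs2, hsq]


lemma polar_rep (p : ℝ × ℝ) (hp : 0 ≤ p.2) :
    ∃ r, 0 ≤ r ∧ ∃ s, s ∈ Set.Icc 0 Real.pi ∧ p = (r * Real.cos s, r * Real.sin s) := by
  by_cases h0 : p = 0
  · exact ⟨0, le_rfl, 0, ⟨le_rfl, Real.pi_nonneg⟩, by simp [h0, Prod.ext_iff]⟩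
  · set r : ℝ := Real.sqrt (p.1 ^ 2 + p.2 ^ 2) with hr
    have hrpos : 0 < r := by
      apply Real.sqrt_pos.mpr
      have : p.1 ≠ 0 ∨ p.2 ≠ 0 := by
        by_contra h
        push_neg at h
        exact h0 (Prod.ext_iff.mpr ⟨h.1, h.2⟩)
      rcases this with h | h <;> positivity
    have hr2 : r ^ 2 = p.1 ^ 2 + p.2 ^ 2 := Real.sq_sqrt (by positivity)
    have h1 : -1 ≤ p.1 / r := by
      rw [le_div_iff₀ hrpos]
      nlinarith [sq_nonneg (p.1 + r), sq_nonneg p.2]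
    have h2 : p.1 / r ≤ 1 := by
      rw [div_le_iff₀ hrpos]
      nlinarith [sq_nonneg (p.1 - r), sq_nonneg p.2]
    refine ⟨r, hrpos.le, Real.arccos (p.1 / r), ⟨Real.arccos_nonneg _, Real.arccos_le_pi _⟩, ?_⟩
    have hc : Real.cos (Real.arccos (p.1 / r)) = p.1 / r := Real.cos_arccos h1 h2
    have hs : Real.sin (Real.arccos (p.1 / r)) = p.2 / r := by
      rw [Real.sin_arccos]
      rw [show 1 - (p.1 / r) ^ 2 = (p.2 / r) ^ 2 by field_simp; nlinarith]
      exact Real.sqrt_sq (by positivity)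
    rw [hc, hs]
    ext <;> field_simp

lemma superadd (v : ℝ → ℝ)
    (hconc : ∀ x ∈ Set.Icc 0 Real.pi, ∀ y ∈ Set.Icc 0 Real.pi,
      0 < y - x → y - x < Real.pi → ∀ t ∈ Set.Icc (0:ℝ) 1,
        v ((1 - t) * x + t * y) ≥
          (Real.sin ((1 - t) * (y - x)) * v x + Real.sin (t * (y - x)) * v y) /
            Real.sin (y - x))
    (f : ℝ × ℝ → ℝ)
    (hf : ∀ r : ℝ, 0 ≤ r → ∀ s ∈ Set.Icc 0 Real.pi,
      f (r * Real.cos s, r * Real.sin s) = r * v s)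
    (h0pi : v 0 + v Real.pi ≤ 0)
    (r ρ : ℝ) (hr : 0 ≤ r) (hρ : 0 ≤ ρ) (α β : ℝ)
    (hα : α ∈ Set.Icc 0 Real.pi) (hβ : β ∈ Set.Icc 0 Real.pi) (hαβ : α ≤ β) :
    r * v α + ρ * v β ≤
      f (r * Real.cos α + ρ * Real.cos β, r * Real.sin α + ρ * Real.sin β) := by
  have hπ : (0:ℝ) < Real.pi := Real.pi_pos
  rcases eq_or_lt_of_le hr with hr0 | hr0
  · rw [← hr0]
    simp only [zero_mul, zero_add]
    rw [hf ρ hρ β hβ]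
  rcases eq_or_lt_of_le hρ with hρ0 | hρ0
  · rw [← hρ0]
    simp only [zero_mul, add_zero]
    rw [hf r hr α hα]
  rcases eq_or_lt_of_le hαβ with hab | hab
  · subst hab
    have : (r * Real.cos α + ρ * Real.cos α, r * Real.sin α + ρ * Real.sin α)
        = ((r + ρ) * Real.cos α, (r + ρ) * Real.sin α) := by ext <;> ring
    rw [this, hf (r + ρ) (by linarith) α hα]
    ring_nf
    exact le_rfl
  rcases eq_or_lt_of_le (show β - α ≤ Real.pi by rcases hα with ⟨h1, _⟩; rcases hβ with ⟨_, h2⟩; linarith) with heq | hlt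
  · -- α = 0, β = π
    have hα0 : α = 0 := by rcases hα with ⟨h1, _⟩; rcases hβ with ⟨_, h2⟩; linarith
    have hβπ : β = Real.pi := by linarith
    subst hα0; subst hβπ
    simp only [Real.cos_zero, Real.sin_zero, Real.cos_pi, Real.sin_pi, mul_one, mul_zero,
      mul_neg, add_zero]
    rcases le_total ρ r with hrρ | hrρ
    · have : (r * 1 + ρ * (-1), (0:ℝ)) = ((r - ρ) * Real.cos 0, (r - ρ) * Real.sin 0) := by
        simp; ring
      rw [show (r * 1 + ρ * (-1), (0:ℝ)) = (r + -ρ, (0:ℝ)) by norm_num] at this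
      rw [this, hf (r - ρ) (by linarith) 0 ⟨le_rfl, Real.pi_nonneg⟩]
      nlinarith
    · have : (r * 1 + ρ * (-1), (0:ℝ)) = ((ρ - r) * Real.cos Real.pi, (ρ - r) * Real.sin Real.pi) := by
        simp; ring
      rw [show (r * 1 + ρ * (-1), (0:ℝ)) = (r + -ρ, (0:ℝ)) by norm_num] at this
      rw [this, hf (ρ - r) (by linarith) Real.pi ⟨Real.pi_nonneg, le_rfl⟩]
      nlinarith
  · -- main case
    have hw2 : 0 ≤ r * Real.sin α + ρ * Real.sin β := by
      have := Real.sin_nonneg_of_nonneg_of_le_pi hα.1 hα.2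
      have := Real.sin_nonneg_of_nonneg_of_le_pi hβ.1 hβ.2
      positivity
    obtain ⟨R, hR, γ, hγ, hw⟩ := polar_rep (r * Real.cos α + ρ * Real.cos β,
      r * Real.sin α + ρ * Real.sin β) hw2
    rw [Prod.ext_iff] at hw
    obtain ⟨hw1, hw2'⟩ := hw
    simp only at hw1 hw2'
    have hsβα : 0 < Real.sin (β - α) := Real.sin_pos_of_pos_of_lt_pi (by linarith) hlt
    have hA : R * Real.sin (β - γ) = r * Real.sin (β - α) := by
      rw [Real.sin_sub, Real.sin_sub]
      linear_combination Real.sin β * hw1.symm - Real.cos β * hw2'.symm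
    have hB : R * Real.sin (γ - α) = ρ * Real.sin (β - α) := by
      rw [Real.sin_sub, Real.sin_sub]
      linear_combination Real.cos α * hw2'.symm - Real.sin α * hw1.symm
    have hsA : 0 < R * Real.sin (β - γ) := by rw [hA]; positivity
    have hsB : 0 < R * Real.sin (γ - α) := by rw [hB]; positivity
    have hRpos : 0 < R := by
      rcases eq_or_lt_of_le hR with h | h
      · exfalso; rw [← h] at hsA; simp at hsA
      · exact h
    have hsinBγ : 0 < Real.sin (β - γ) := by
      rcases mul_pos_iff.mp hsA with ⟨_, h⟩ | ⟨h, _⟩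
      · exact h
      · linarith
    have hsinγA : 0 < Real.sin (γ - α) := by
      rcases mul_pos_iff.mp hsB with ⟨_, h⟩ | ⟨h, _⟩
      · exact h
      · linarith
    have hγα : α < γ := by
      by_contra h
      push_neg at h
      have : Real.sin (γ - α) ≤ 0 :=
        Real.sin_nonpos_of_nonpos_of_neg_pi_le (by linarith) (by
          rcases hγ with ⟨h1, _⟩; rcases hα with ⟨_, h2⟩; linarith)
      linarith
    have hβγ : γ < β := by
      by_contra h
      push_neg at h
      have : Real.sin (β - γ) ≤ 0 :=
        Real.sin_nonpos_of_nonpos_of_neg_pi_le (by linarith) (by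
          rcases hγ with ⟨_, h1⟩; rcases hβ with ⟨h2, _⟩; linarith)
      linarith
    set t : ℝ := (γ - α) / (β - α) with ht
    have hβα : β - α ≠ 0 := by linarith
    have htmem : t ∈ Set.Icc (0:ℝ) 1 := by
      constructor
      · apply div_nonneg <;> linarith
      · rw [div_le_one (by linarith)]; linarith
    have e1 : t * (β - α) = γ - α := div_mul_cancel₀ _ hβα
    have e2 : (1 - t) * (β - α) = β - γ := by linear_combination -e1
    have e3 : (1 - t) * α + t * β = γ := by linear_combination e1
    have h := hconc α hα β hβ (by linarith) (by linarith) t htmem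
    rw [e1, e2, e3] at h
    rw [show (r * Real.cos α + ρ * Real.cos β, r * Real.sin α + ρ * Real.sin β)
        = (R * Real.cos γ, R * Real.sin γ) by rw [Prod.ext_iff]; exact ⟨hw1, hw2'⟩,
      hf R hR γ hγ]
    rw [ge_iff_le, div_le_iff₀ hsβα] at h
    have h' := mul_le_mul_of_nonneg_left h hR
    have hfin : R * (Real.sin (β - γ) * v α + Real.sin (γ - α) * v β)
        = (r * v α + ρ * v β) * Real.sin (β - α) := by
      linear_combination v α * hA + v β * hB
    rw [hfin] at h'
    have h'' : (r * v α + ρ * v β) * Real.sin (β - α) ≤ (R * v γ) * Real.sin (β - α) := by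
      calc (r * v α + ρ * v β) * Real.sin (β - α) ≤ R * (v γ * Real.sin (β - α)) := h'
        _ = (R * v γ) * Real.sin (β - α) := by ring
    exact le_of_mul_le_mul_right h'' hsβα

/-- The positively 1-homogeneous extension to the closed upper half-plane (via polar
coordinates) of a function on `[0,π]` satisfying the 1-concavity inequality
(`v'' + v ≤ 0`) is concave on the closed upper half-plane. -/
theorem concaveOn_homogeneous_extension (v : ℝ → ℝ)
    (hcont : ContinuousOn v (Set.Icc 0 Real.pi))
    (hconc : ∀ x ∈ Set.Icc 0 Real.pi, ∀ y ∈ Set.Icc 0 Real.pi,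
      0 < y - x → y - x < Real.pi → ∀ t ∈ Set.Icc (0:ℝ) 1,
        v ((1 - t) * x + t * y) ≥
          (Real.sin ((1 - t) * (y - x)) * v x + Real.sin (t * (y - x)) * v y) /
            Real.sin (y - x))
    (f : ℝ × ℝ → ℝ)
    (hf : ∀ r : ℝ, 0 ≤ r → ∀ s ∈ Set.Icc 0 Real.pi,
      f (r * Real.cos s, r * Real.sin s) = r * v s) :
    ConcaveOn ℝ {p : ℝ × ℝ | 0 ≤ p.2} f := by
  have h0pi := v0_vpi v hconc
  constructor
  · intro p hp q hq a b ha hb hab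
    simp only [Set.mem_setOf_eq] at hp hq ⊢
    have : (a • p + b • q).2 = a * p.2 + b * q.2 := rfl
    rw [this]
    have := mul_nonneg ha hp
    have := mul_nonneg hb hq
    linarith
  · intro p hp q hq a b ha hb hab
    simp only [Set.mem_setOf_eq] at hp hq
    obtain ⟨r, hr, α, hα, hpe⟩ := polar_rep p hp
    obtain ⟨ρ, hρ, β, hβ, hqe⟩ := polar_rep q hq
    have hfp : f p = r * v α := by rw [hpe, hf r hr α hα]
    have hfq : f q = ρ * v β := by rw [hqe, hf ρ hρ β hβ]
    have hsum : a • p + b • q = ((a * r) * Real.cos α + (b * ρ) * Real.cos β,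
        (a * r) * Real.sin α + (b * ρ) * Real.sin β) := by
      rw [hpe, hqe]
      ext <;> simp [Prod.smul_def, smul_eq_mul] <;> ring
    rw [hsum, hfp, hfq, smul_eq_mul, smul_eq_mul]
    rcases le_total α β with hab' | hab'
    · have := superadd v hconc f hf h0pi (a * r) (b * ρ)
        (mul_nonneg ha hr) (mul_nonneg hb hρ) α β hα hβ hab'
      calc a * (r * v α) + b * (ρ * v β)
          = (a * r) * v α + (b * ρ) * v β := by ring
        _ ≤ _ := this
    · have := superadd v hconc f hf h0pi (b * ρ) (a * r)
        (mul_nonneg hb hρ) (mul_nonneg ha hr) β α hβ hα hab'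
      calc a * (r * v α) + b * (ρ * v β)
          = (b * ρ) * v β + (a * r) * v α := by ring
        _ ≤ f ((b * ρ) * Real.cos β + (a * r) * Real.cos α,
              (b * ρ) * Real.sin β + (a * r) * Real.sin α) := this
        _ = _ := by rw [show (b * ρ) * Real.cos β + (a * r) * Real.cos α
                = (a * r) * Real.cos α + (b * ρ) * Real.cos β by ring,
              show (b * ρ) * Real.sin β + (a * r) * Real.sin α
                = (a * r) * Real.sin α + (b * ρ) * Real.sin β by ring]
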